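/- Let p : Γ → Λ be a covering of k-graphs and let v ∈ Γ^0. Then the map x ↦ p ∘ x is a bijection from vΓ^∞ onto p(v)Λ^∞; that is, every infinite path of Λ with range p(v) lifts uniquely to an infinite path of Γ with range v. -/

import Mathlib

open CategoryTheory

attribute [local instance 2000] Preorder.smallCategory

/-- A `k`-graph: a small category `Λ` equipped with a degree functor `d : Λ → ℕᵏ`
satisfying the unique factorisation property.  Morphisms point from the range of a path
to its source, so that `f ≫ g` corresponds to the composition `fg` of paths in the
`k`-graph literature (with `r (f ≫ g) = r f` and `s (f ≫ g) = s g`). -/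
structure KGraph (k : ℕ) (Λ : Type) [SmallCategory Λ] : Type where
  deg : ∀ {a b : Λ}, (a ⟶ b) → Fin k → ℕ
  deg_id : ∀ a : Λ, deg (𝟙 a) = 0
  deg_comp : ∀ {a b c : Λ} (f : a ⟶ b) (g : b ⟶ c), deg (f ≫ g) = deg f + deg g
  factor : ∀ {a b : Λ} (f : a ⟶ b) (m n : Fin k → ℕ), deg f = m + n →
    ∃! t : Σ c : Λ, (a ⟶ c) × (c ⟶ b),
      deg t.2.1 = m ∧ deg t.2.2 = n ∧ t.2.1 ≫ t.2.2 = f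

/-- An infinite path in a `k`-graph: a degree-preserving functor `Ω_k → Λ`, where `Ω_k`
is realised as the preorder category on `ℕᵏ = Fin k → ℕ`; the morphism `(p, q)` (for
`p ≤ q`) is `homOfLE h : p ⟶ q` and must be sent to a path of degree `q - p`.
The range of the path is `P.obj 0`. -/
structure InfPath {k : ℕ} {Λ : Type} [SmallCategory Λ] (KG : KGraph k Λ) : Type where
  P : (Fin k → ℕ) ⥤ Λ
  deg_eq : ∀ {p q : Fin k → ℕ} (h : p ≤ q), KG.deg (P.map (homOfLE h)) = q - p

/-- Translation by `n` on `ℕᵏ`, as a functor. -/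
def transFunctor (k : ℕ) (n : Fin k → ℕ) : (Fin k → ℕ) ⥤ (Fin k → ℕ) where
  obj p := p + n
  map f := homOfLE (add_le_add (leOfHom f) (le_refl n))
  map_id _ := rfl
  map_comp _ _ := rfl

/-- The shift `σⁿ x` of an infinite path `x`, satisfying `σⁿ x (p, q) = x (p + n, q + n)`. -/
def InfPath.shift {k : ℕ} {Λ : Type} [SmallCategory Λ] {KG : KGraph k Λ}
    (x : InfPath KG) (n : Fin k → ℕ) : InfPath KG where
  P := transFunctor k n ⋙ x.P
  deg_eq {p q} h := by
    have h1 : (transFunctor k n ⋙ x.P).map (homOfLE h)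
        = x.P.map (homOfLE (add_le_add h (le_refl n))) := rfl
    refine ((congrArg KG.deg h1).trans (x.deg_eq _)).trans ?_
    funext i
    simp only [Pi.sub_apply, Pi.add_apply]
    omega

/-- A covering of `k`-graphs: a degree-preserving functor `p : Γ → Λ` which is surjective
on paths and restricts to bijections `vΓ → p(v)Λ` and `Γv → Λp(v)` for every vertex `v`. -/
structure IsCovering {k : ℕ} {Γ Λ : Type} [SmallCategory Γ] [SmallCategory Λ]
    (KGΓ : KGraph k Γ) (KGΛ : KGraph k Λ) (p : Γ ⥤ Λ) : Prop where
  deg_map : ∀ {a b : Γ} (f : a ⟶ b), KGΛ.deg (p.map f) = KGΓ.deg f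
  surj : Function.Surjective
    (fun t : Σ (a b : Γ), a ⟶ b => (⟨p.obj t.1, p.obj t.2.1, p.map t.2.2⟩ : Σ (a b : Λ), a ⟶ b))
  bij_out : ∀ v : Γ, Function.Bijective
    (fun t : Σ b : Γ, (v ⟶ b) => (⟨p.obj t.1, p.map t.2⟩ : Σ b' : Λ, (p.obj v ⟶ b')))
  bij_in : ∀ v : Γ, Function.Bijective
    (fun t : Σ a : Γ, (a ⟶ v) => (⟨p.obj t.1, p.map t.2⟩ : Σ a' : Λ, (a' ⟶ p.obj v)))

/-- The image `p ∘ x` of an infinite path of `Γ` under a covering `p : Γ → Λ`. -/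
def InfPath.push {k : ℕ} {Γ Λ : Type} [SmallCategory Γ] [SmallCategory Λ]
    {KGΓ : KGraph k Γ} {KGΛ : KGraph k Λ} {p : Γ ⥤ Λ}
    (hc : IsCovering KGΓ KGΛ p) (x : InfPath KGΓ) : InfPath KGΛ where
  P := x.P ⋙ p
  deg_eq {a b} h := by
    have h1 : (x.P ⋙ p).map (homOfLE h) = p.map (x.P.map (homOfLE h)) := rfl
    rw [h1, hc.deg_map, x.deg_eq]

section Aux

variable {k : ℕ} {C : Type} [SmallCategory C]

lemma KGraph.deg_eqToHom (KG : KGraph k C) {a b : C} (h : a = b) :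
    KG.deg (eqToHom h) = 0 := by subst h; simpa using KG.deg_id a

/-- Left cancellation in a `k`-graph, via unique factorisation. -/
lemma KGraph.cancel_left (KG : KGraph k C) {a b c : C} (f : a ⟶ b) {g1 g2 : b ⟶ c}
    (hd : KG.deg g1 = KG.deg g2) (h : f ≫ g1 = f ≫ g2) : g1 = g2 := by
  obtain ⟨t, -, hu⟩ := KG.factor (f ≫ g1) (KG.deg f) (KG.deg g1) (KG.deg_comp f g1)
  have h1 := hu ⟨b, f, g1⟩ ⟨rfl, rfl, rfl⟩
  have h2 := hu ⟨b, f, g2⟩ ⟨rfl, hd.symm, h.symm⟩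
  have h3 := h2.trans h1.symm
  injection h3 with h4 h5
  exact ((Prod.mk.injEq _ _ _ _).mp h5).2.symm

lemma sigma_hom_eq {a : C} {t u : Σ b, a ⟶ b} (h : t = u) :
    t.2 ≫ eqToHom (congrArg Sigma.fst h) = u.2 := by subst h; simp

lemma sigma_eq_of_comp {a b b' : C} (e : b = b') {f : a ⟶ b} {f' : a ⟶ b'}
    (h : f ≫ eqToHom e = f') : (⟨b, f⟩ : Σ c, a ⟶ c) = ⟨b', f'⟩ := by
  subst e; subst h; simp

lemma sigma_eqToHom_eq {a b : C} (h : a = b) :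
    (⟨b, eqToHom h⟩ : Σ c, a ⟶ c) = ⟨a, 𝟙 a⟩ := by subst h; simp

lemma InfPath.ext' {KG : KGraph k C} {x y : InfPath KG} (h : x.P = y.P) : x = y := by
  cases x; cases y; cases h; rfl

end Aux

section Lift

variable {k : ℕ} {Γ Λ : Type} [SmallCategory Γ] [SmallCategory Λ]
  {KGΓ : KGraph k Γ} {KGΛ : KGraph k Λ} {p : Γ ⥤ Λ}
  (hc : IsCovering KGΓ KGΛ p) {v : Γ} (y : InfPath KGΛ) (hy : y.P.obj 0 = p.obj v)

/-- The path of degree `n` from `p v` along `y`. -/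
def Ypath (n : Fin k → ℕ) : p.obj v ⟶ y.P.obj n :=
  eqToHom hy.symm ≫ y.P.map (homOfLE (zero_le : 0 ≤ n))

lemma Ypath_deg (n : Fin k → ℕ) : KGΛ.deg (Ypath y hy n) = n := by
  unfold Ypath
  rw [KGΛ.deg_comp, KGΛ.deg_eqToHom, y.deg_eq, zero_add]
  funext i; simp

lemma Ypath_comp {m n : Fin k → ℕ} (h : m ≤ n) :
    Ypath y hy m ≫ y.P.map (homOfLE h) = Ypath y hy n := by
  unfold Ypath
  rw [Category.assoc, ← y.P.map_comp]
  rfl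

lemma Ypath_zero :
    (⟨y.P.obj 0, Ypath y hy 0⟩ : Σ b', p.obj v ⟶ b') = ⟨p.obj v, 𝟙 (p.obj v)⟩ := by
  have h0 : Ypath y hy 0 = eqToHom hy.symm := by
    unfold Ypath
    rw [show homOfLE ((zero_le : (0 : Fin k → ℕ) ≤ 0)) = 𝟙 (0 : Fin k → ℕ) from rfl,
      y.P.map_id, Category.comp_id]
  rw [h0]
  exact sigma_eqToHom_eq hy.symm

/-- The lift of the vertex `y n` together with the lift of the path `Ypath n`. -/
noncomputable def Lfun (n : Fin k → ℕ) : Σ b : Γ, v ⟶ b :=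
  ((hc.bij_out v).2 ⟨y.P.obj n, Ypath y hy n⟩).choose

lemma Lfun_spec (n : Fin k → ℕ) :
    (⟨p.obj (Lfun hc y hy n).1, p.map (Lfun hc y hy n).2⟩ : Σ b', p.obj v ⟶ b')
      = ⟨y.P.obj n, Ypath y hy n⟩ :=
  ((hc.bij_out v).2 ⟨y.P.obj n, Ypath y hy n⟩).choose_spec

lemma Lfun_obj (n : Fin k → ℕ) : p.obj (Lfun hc y hy n).1 = y.P.obj n :=
  congrArg Sigma.fst (Lfun_spec hc y hy n)

lemma Lfun_hom (n : Fin k → ℕ) :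
    p.map (Lfun hc y hy n).2 ≫ eqToHom (Lfun_obj hc y hy n) = Ypath y hy n :=
  sigma_hom_eq (Lfun_spec hc y hy n)

lemma Lfun_deg (n : Fin k → ℕ) : KGΓ.deg (Lfun hc y hy n).2 = n := by
  rw [← hc.deg_map]
  have h := congrArg (fun t : Σ b', p.obj v ⟶ b' => KGΛ.deg t.2) (Lfun_spec hc y hy n)
  simpa [Ypath_deg] using h

/-- Existence and uniqueness of the connecting morphisms of the lifted path. -/
lemma Xexu {m n : Fin k → ℕ} (h : m ≤ n) :
    ∃! g : (Lfun hc y hy m).1 ⟶ (Lfun hc y hy n).1,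
      KGΓ.deg g = n - m ∧ (Lfun hc y hy m).2 ≫ g = (Lfun hc y hy n).2 := by
  have hmn : m + (n - m) = n := by
    funext i; have := Pi.le_def.mp h i; simp only [Pi.add_apply, Pi.sub_apply]; omega
  obtain ⟨⟨c, f, g⟩, ⟨hf, hg, hfg⟩, -⟩ :=
    KGΓ.factor (Lfun hc y hy n).2 m (n - m) (by rw [Lfun_deg, hmn])
  obtain ⟨T, -, hU⟩ := KGΛ.factor (Ypath y hy n) m (n - m) (by rw [Ypath_deg, hmn])
  have t1 := hU ⟨p.obj c, p.map f, p.map g ≫ eqToHom (Lfun_obj hc y hy n)⟩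
    ⟨by rw [hc.deg_map, hf],
     by rw [KGΛ.deg_comp, hc.deg_map, hg, KGΛ.deg_eqToHom, add_zero],
     by rw [← Category.assoc, ← p.map_comp, hfg]; exact Lfun_hom hc y hy n⟩
  have t2 := hU ⟨y.P.obj m, Ypath y hy m, y.P.map (homOfLE h)⟩
    ⟨Ypath_deg y hy m, y.deg_eq h, Ypath_comp y hy h⟩
  have t3 := t1.trans t2.symm
  have t4 : (⟨p.obj c, p.map f⟩ : Σ b', p.obj v ⟶ b') = ⟨y.P.obj m, Ypath y hy m⟩ := by
    have h5 := congrArg (fun t : Σ c' : Λ, (p.obj v ⟶ c') × (c' ⟶ y.P.obj n) =>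
      (⟨t.1, t.2.1⟩ : Σ b', p.obj v ⟶ b')) t3
    simpa using h5
  have t5 : (⟨c, f⟩ : Σ b, v ⟶ b) = Lfun hc y hy m :=
    (hc.bij_out v).1 (t4.trans (Lfun_spec hc y hy m).symm)
  have ec : c = (Lfun hc y hy m).1 := congrArg Sigma.fst t5
  have hf2 : f ≫ eqToHom ec = (Lfun hc y hy m).2 := sigma_hom_eq t5
  refine ⟨eqToHom ec.symm ≫ g, ⟨?_, ?_⟩, ?_⟩
  · rw [KGΓ.deg_comp, KGΓ.deg_eqToHom, zero_add, hg]
  · rw [← hf2]; simp [hfg]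
  · rintro g' ⟨hd', hcomp'⟩
    refine KGΓ.cancel_left (Lfun hc y hy m).2 ?_ ?_
    · rw [hd', KGΓ.deg_comp, KGΓ.deg_eqToHom, zero_add, hg]
    · rw [hcomp', ← hf2]; simp [hfg]

noncomputable def Xmap {m n : Fin k → ℕ} (h : m ≤ n) :
    (Lfun hc y hy m).1 ⟶ (Lfun hc y hy n).1 :=
  (Xexu hc y hy h).exists.choose

lemma Xmap_spec {m n : Fin k → ℕ} (h : m ≤ n) :
    KGΓ.deg (Xmap hc y hy h) = n - m ∧
      (Lfun hc y hy m).2 ≫ Xmap hc y hy h = (Lfun hc y hy n).2 :=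
  (Xexu hc y hy h).exists.choose_spec

lemma Xmap_uniq {m n : Fin k → ℕ} (h : m ≤ n) (g : (Lfun hc y hy m).1 ⟶ (Lfun hc y hy n).1)
    (hd : KGΓ.deg g = n - m) (hcomp : (Lfun hc y hy m).2 ≫ g = (Lfun hc y hy n).2) :
    g = Xmap hc y hy h :=
  (Xexu hc y hy h).unique ⟨hd, hcomp⟩ (Xmap_spec hc y hy h)

/-- The lifted infinite path. -/
noncomputable def liftPath : InfPath KGΓ where
  P :=
    { obj := fun n => (Lfun hc y hy n).1
      map := fun {m n} f => Xmap hc y hy (leOfHom f)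
      map_id := fun n => by
        exact (Xmap_uniq hc y hy le_rfl (𝟙 _)
          (by rw [KGΓ.deg_id]; funext i; simp) (Category.comp_id _)).symm
      map_comp := fun {m n q} f g => by
        refine (Xmap_uniq hc y hy (leOfHom (f ≫ g)) _ ?_ ?_).symm
        · rw [KGΓ.deg_comp, (Xmap_spec hc y hy (leOfHom f)).1,
            (Xmap_spec hc y hy (leOfHom g)).1]
          funext i
          have h1 := Pi.le_def.mp (leOfHom f) i
          have h2 := Pi.le_def.mp (leOfHom g) i
          simp only [Pi.add_apply, Pi.sub_apply]
          omega
        · rw [← Category.assoc, (Xmap_spec hc y hy (leOfHom f)).2,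
            (Xmap_spec hc y hy (leOfHom g)).2] }
  deg_eq := fun {m n} h => (Xmap_spec hc y hy (leOfHom (homOfLE h))).1

lemma liftPath_obj_zero : (liftPath hc y hy).P.obj 0 = v := by
  have h0 : Lfun hc y hy 0 = ⟨v, 𝟙 v⟩ := by
    apply (hc.bij_out v).1
    dsimp only
    rw [Lfun_spec hc y hy 0, CategoryTheory.Functor.map_id]
    exact Ypath_zero y hy
  exact congrArg Sigma.fst h0

lemma liftPath_push : InfPath.push hc (liftPath hc y hy) = y := by
  apply InfPath.ext'
  refine CategoryTheory.Functor.ext (fun n => Lfun_obj hc y hy n) ?_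
  intro m n f
  have key : p.map (Xmap hc y hy (leOfHom f)) ≫ eqToHom (Lfun_obj hc y hy n)
      = eqToHom (Lfun_obj hc y hy m) ≫ y.P.map f := by
    refine KGΛ.cancel_left (p.map (Lfun hc y hy m).2) ?_ ?_
    · rw [KGΛ.deg_comp, KGΛ.deg_comp, hc.deg_map, (Xmap_spec hc y hy (leOfHom f)).1,
        KGΛ.deg_eqToHom, KGΛ.deg_eqToHom, add_zero, zero_add,
        show f = homOfLE (leOfHom f) from rfl, y.deg_eq]
    · have hL : p.map (Lfun hc y hy m).2 ≫ p.map (Xmap hc y hy (leOfHom f)) ≫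
          eqToHom (Lfun_obj hc y hy n) = Ypath y hy n := by
        rw [← Category.assoc, ← p.map_comp, (Xmap_spec hc y hy (leOfHom f)).2,
          Lfun_hom hc y hy n]
      have hR : p.map (Lfun hc y hy m).2 ≫ eqToHom (Lfun_obj hc y hy m) ≫ y.P.map f
          = Ypath y hy n := by
        rw [← Category.assoc, Lfun_hom hc y hy m,
          show f = homOfLE (leOfHom f) from rfl, Ypath_comp]
      rw [hL, hR]
  show p.map (Xmap hc y hy (leOfHom f)) = _
  have key2 := key =≫ eqToHom (Lfun_obj hc y hy n).symm
  simp only [Category.assoc, eqToHom_trans, eqToHom_refl, Category.comp_id] at key2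
  exact key2

end Lift

/-- If `p : Γ → Λ` is a covering of `k`-graphs and `v ∈ Γ⁰`, then
`x ↦ p ∘ x` is a bijection from `vΓ^∞` onto `p(v)Λ^∞`: every infinite path of `Λ` with
range `p(v)` lifts uniquely to an infinite path of `Γ` with range `v`. -/
theorem stmt8 {k : ℕ} {Γ Λ : Type} [SmallCategory Γ] [SmallCategory Λ]
    {KGΓ : KGraph k Γ} {KGΛ : KGraph k Λ} {p : Γ ⥤ Λ}
    (hc : IsCovering KGΓ KGΛ p) (v : Γ) :
    Set.BijOn (InfPath.push hc)
      {x : InfPath KGΓ | x.P.obj 0 = v}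
      {y : InfPath KGΛ | y.P.obj 0 = p.obj v} := by
  refine ⟨fun x hx => congrArg p.obj hx, ?_, ?_⟩
  · -- injectivity
    intro x1 h1 x2 h2 hpush
    have hP : x1.P ⋙ p = x2.P ⋙ p := congrArg InfPath.P hpush
    have h1' : x1.P.obj 0 = v := h1
    have h2' : x2.P.obj 0 = v := h2
    have SA : ∀ n : Fin k → ℕ,
        (⟨x1.P.obj n, eqToHom h1'.symm ≫ x1.P.map (homOfLE (zero_le : 0 ≤ n))⟩ : Σ b, v ⟶ b)
        = ⟨x2.P.obj n, eqToHom h2'.symm ≫ x2.P.map (homOfLE (zero_le : 0 ≤ n))⟩ := by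
      intro n
      apply (hc.bij_out v).1
      dsimp only
      apply sigma_eq_of_comp (Functor.congr_obj hP n)
      rw [p.map_comp, p.map_comp, eqToHom_map, eqToHom_map]
      rw [show p.map (x1.P.map (homOfLE (zero_le : 0 ≤ n)))
            = (x1.P ⋙ p).map (homOfLE (zero_le : 0 ≤ n)) from rfl,
        Functor.congr_hom hP (homOfLE (zero_le : 0 ≤ n))]
      simp [eqToHom_trans]
    have en : ∀ n, x1.P.obj n = x2.P.obj n := fun n => congrArg Sigma.fst (SA n)
    have hAB : ∀ n : Fin k → ℕ,
        eqToHom h1'.symm ≫ x1.P.map (homOfLE (zero_le : 0 ≤ n)) ≫ eqToHom (en n)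
          = eqToHom h2'.symm ≫ x2.P.map (homOfLE (zero_le : 0 ≤ n)) := by
      intro n
      have := sigma_hom_eq (SA n)
      simpa [Category.assoc] using this
    apply InfPath.ext'
    refine CategoryTheory.Functor.ext en ?_
    intro m n f
    have key : x1.P.map f ≫ eqToHom (en n) = eqToHom (en m) ≫ x2.P.map f := by
      refine KGΓ.cancel_left (eqToHom h1'.symm ≫ x1.P.map (homOfLE (zero_le : 0 ≤ m))) ?_ ?_
      · rw [KGΓ.deg_comp, KGΓ.deg_eqToHom, KGΓ.deg_comp, KGΓ.deg_eqToHom,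
          show f = homOfLE (leOfHom f) from rfl, x1.deg_eq, x2.deg_eq, add_zero, zero_add]
      · simp only [Category.assoc]
        rw [show x1.P.map (homOfLE (zero_le : 0 ≤ m)) ≫ x1.P.map f ≫ eqToHom (en n)
              = x1.P.map (homOfLE (zero_le : 0 ≤ n)) ≫ eqToHom (en n) from by
            rw [← Category.assoc, ← x1.P.map_comp]; rfl]
        have hABm := congrArg (· ≫ x2.P.map f) (hAB m)
        simp only [Category.assoc] at hABm
        rw [show (eqToHom h1'.symm ≫ x1.P.map (homOfLE (zero_le : 0 ≤ n)) ≫ eqToHom (en n) :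
              _ ⟶ _) = eqToHom h2'.symm ≫ x2.P.map (homOfLE (zero_le : 0 ≤ n)) from by
            simpa [Category.assoc] using hAB n]
        rw [hABm, ← x2.P.map_comp]
        rfl
    rw [← cancel_mono (eqToHom (en n))]
    simpa using key
  · -- surjectivity
    intro y hy
    exact ⟨liftPath hc y hy, liftPath_obj_zero hc y hy, liftPath_push hc y hy⟩
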